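/- If A is an n×n matrix over ℂ with |perm(A)| = ‖A‖₂ⁿ and ‖A‖₂ = 1, then A has exactly n nonzero entries, each of modulus 1, no two in the same row or column; equivalently, A is a permutation matrix times a unitary diagonal matrix. -/

import Mathlib

open MeasureTheory

/-- The permanent of a complex square matrix. -/
noncomputable def perm {n : ℕ} (A : Matrix (Fin n) (Fin n) ℂ) : ℂ :=
  ∑ σ : Equiv.Perm (Fin n), ∏ i, A i (σ i)

/-- The operator 2-norm of a complex square matrix. -/
noncomputable def opNorm {n : ℕ} (A : Matrix (Fin n) (Fin n) ℂ) : ℝ :=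
  ‖LinearMap.toContinuousLinearMap (Matrix.toEuclideanLin A)‖

/-- Uniform probability measure parametrizing `n` i.i.d. points of the unit circle. -/
noncomputable def circleMeasure (n : ℕ) : Measure (Fin n → ℝ) :=
  Measure.pi fun _ => volume.restrict (Set.Icc 0 1)

/-- The random vector with i.i.d. coordinates uniform on the unit circle. -/
noncomputable def Xc {n : ℕ} (θ : Fin n → ℝ) : Fin n → ℂ :=
  fun i => Complex.exp (2 * Real.pi * Complex.I * (θ i))

lemma charSum {m : ℕ} (hm : m ≠ 0) {ω : ℂ} (hprim : IsPrimitiveRoot ω m) (c : ℤ) :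
    ∑ t : Fin m, ω ^ (c * (t : ℤ)) = if (m:ℤ) ∣ c then (m:ℂ) else 0 := by
  have hpow : ∀ t : Fin m, ω ^ (c * (t:ℤ)) = (ω ^ c) ^ (t : ℕ) := by
    intro t
    rw [zpow_mul, ← zpow_natCast (ω ^ c) (t : ℕ)]
  simp_rw [hpow]
  rw [Fin.sum_univ_eq_sum_range (fun t => (ω ^ c) ^ t) m]
  by_cases h : (m:ℤ) ∣ c
  · have : ω ^ c = 1 := (hprim.zpow_eq_one_iff_dvd c).mpr h
    simp [this, h]
  · have hne : ω ^ c ≠ 1 := fun hc => h ((hprim.zpow_eq_one_iff_dvd c).mp hc)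
    rw [geom_sum_eq hne]
    have : (ω ^ c) ^ m = 1 := by
      rw [← zpow_natCast (ω^c) m, ← zpow_mul, mul_comm, zpow_mul, zpow_natCast,
        hprim.pow_eq_one, one_zpow]
    simp [this, h]

lemma multiCharSum {m n : ℕ} (hm : m ≠ 0) {ω : ℂ} (hprim : IsPrimitiveRoot ω m) (c : Fin n → ℤ) :
    ∑ θ : Fin n → Fin m, ∏ j, ω ^ (c j * (θ j : ℤ))
      = ∏ j, (if (m:ℤ) ∣ c j then (m:ℂ) else 0) := by
  have h := Finset.prod_univ_sum (fun _ : Fin n => (Finset.univ : Finset (Fin m)))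
    (fun j t => ω ^ (c j * (t : ℤ)))
  rw [Fintype.piFinset_univ] at h
  rw [← h]
  exact Finset.prod_congr rfl fun j _ => charSum hm hprim (c j)

section Identity

variable {n : ℕ}

noncomputable def rou (n : ℕ) : ℂ := Complex.exp (2 * Real.pi * Complex.I / (n+1))

lemma rou_prim (n : ℕ) : IsPrimitiveRoot (rou n) (n+1) := by
  have := Complex.isPrimitiveRoot_exp (n+1) (Nat.succ_ne_zero n)
  simpa [rou] using this

lemma rou_ne_zero (n : ℕ) : rou n ≠ 0 := (rou_prim n).ne_zero (Nat.succ_ne_zero n)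

lemma fiber_card_iff (g : Fin n → Fin n) :
    (∀ j, (Finset.univ.filter (fun i => g i = j)).card = 1) ↔ Function.Bijective g := by
  constructor
  · intro h
    have hsurj : Function.Surjective g := by
      intro j
      have := h j
      rw [Finset.card_eq_one] at this
      obtain ⟨a, ha⟩ := this
      have : a ∈ Finset.univ.filter (fun i => g i = j) := ha ▸ Finset.mem_singleton_self a
      exact ⟨a, (Finset.mem_filter.mp this).2⟩
    exact ⟨(Finite.injective_iff_surjective).mpr hsurj, hsurj⟩
  · intro hg j
    rw [Finset.card_eq_one]
    obtain ⟨a, ha⟩ := hg.surjective j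
    refine ⟨a, ?_⟩
    ext i
    simp only [Finset.mem_filter, Finset.mem_univ, true_and, Finset.mem_singleton]
    constructor
    · intro hi; exact hg.injective (hi.trans ha.symm)
    · rintro rfl; exact ha

def fib (g : Fin n → Fin n) (j : Fin n) : ℤ :=
  ((Finset.univ.filter (fun i => g i = j)).card : ℤ) - 1

lemma theta_sum (g : Fin n → Fin n) :
    ∑ θ : Fin n → Fin (n+1), (∏ i, rou n ^ ((θ (g i) : ℤ))) * ∏ i, rou n ^ (-(θ i : ℤ))
      = if Function.Bijective g then ((n+1 : ℕ) : ℂ) ^ n else 0 := by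
  set ω := rou n
  have hω := rou_ne_zero n
  have hc : ∀ j, fib g j = ((Finset.univ.filter (fun i => g i = j)).card : ℤ) - 1 :=
    fun _ => rfl
  have step1 : ∀ θ : Fin n → Fin (n+1),
      (∏ i, ω ^ ((θ (g i) : ℤ))) * ∏ i, ω ^ (-(θ i : ℤ)) = ∏ j, ω ^ (fib g j * (θ j : ℤ)) := by
    intro θ
    have hfib : ∏ i, ω ^ ((θ (g i) : ℤ))
        = ∏ j, ω ^ (((Finset.univ.filter (fun i => g i = j)).card : ℤ) * (θ j : ℤ)) := by
      rw [← Finset.prod_fiberwise Finset.univ g (fun i => ω ^ ((θ (g i) : ℤ)))]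
      refine Finset.prod_congr rfl fun j _ => ?_
      have hcongr : ∀ i ∈ Finset.univ.filter (fun i => g i = j),
          ω ^ ((θ (g i) : ℤ)) = ω ^ ((θ j : ℤ)) := fun i hi => by
        rw [(Finset.mem_filter.mp hi).2]
      rw [Finset.prod_congr rfl hcongr, Finset.prod_const,
        ← zpow_natCast (ω ^ ((θ j : ℤ))), ← zpow_mul, mul_comm]
    rw [hfib, ← Finset.prod_mul_distrib]
    refine Finset.prod_congr rfl fun j _ => ?_
    rw [← zpow_add₀ hω, hc]
    ring_nf
    rfl
  simp_rw [step1]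
  rw [multiCharSum (Nat.succ_ne_zero n) (rou_prim n) (fib g)]
  by_cases hg : Function.Bijective g
  · have h1 : ∀ j, fib g j = 0 := by
      intro j
      have h2 := (fiber_card_iff g).mpr hg j
      rw [hc j, h2]
      ring
    simp only [hg, if_true]
    have hconst : ∀ j ∈ (Finset.univ : Finset (Fin n)),
        (if ((n+1:ℕ):ℤ) ∣ fib g j then ((n+1:ℕ):ℂ) else 0) = ((n+1:ℕ):ℂ) := by
      intro j _
      rw [h1 j]
      simp
    rw [Finset.prod_congr rfl hconst, Finset.prod_const]
    simp
  · simp only [hg, if_false]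
    have : ∃ j, ¬ (Finset.univ.filter (fun i => g i = j)).card = 1 := by
      by_contra h
      push_neg at h
      exact hg ((fiber_card_iff g).mp h)
    obtain ⟨j, hj⟩ := this
    refine Finset.prod_eq_zero (Finset.mem_univ j) ?_
    have hle : (Finset.univ.filter (fun i => g i = j)).card ≤ n := by
      calc (Finset.univ.filter (fun i => g i = j)).card ≤ Finset.univ.card :=
            Finset.card_filter_le _ _
        _ = n := by simp
    have hne : ¬ ((n:ℤ)+1) ∣ fib g j := by
      intro hdvd
      have habs : |fib g j| < (n:ℤ)+1 := by
        rw [hc j, abs_lt]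
        have hn : 0 < n := j.pos
        generalize hN : (Finset.filter (fun i => g i = j) Finset.univ).card = N at hle ⊢
        omega
      have h0 : fib g j = 0 := Int.eq_zero_of_abs_lt_dvd hdvd habs
      rw [hc j] at h0
      generalize hN : (Finset.filter (fun i => g i = j) Finset.univ).card = N at h0 hj
      omega
    rw [if_neg (by push_cast; exact_mod_cast hne)]

lemma identity (A : Matrix (Fin n) (Fin n) ℂ) :
    ∑ θ : Fin n → Fin (n+1),
        ∏ i, ((∑ j, A i j * rou n ^ ((θ j : ℤ))) * rou n ^ (-(θ i : ℤ)))
      = ((n+1 : ℕ) : ℂ) ^ n * perm A := by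
  set ω := rou n
  have expand : ∀ θ : Fin n → Fin (n+1),
      ∏ i, ((∑ j, A i j * ω ^ ((θ j : ℤ))) * ω ^ (-(θ i : ℤ)))
        = ∑ g : Fin n → Fin n,
            (∏ i, A i (g i)) * ((∏ i, ω ^ ((θ (g i) : ℤ))) * ∏ i, ω ^ (-(θ i : ℤ))) := by
    intro θ
    rw [Finset.prod_mul_distrib]
    have h := Finset.prod_univ_sum (fun _ : Fin n => (Finset.univ : Finset (Fin n)))
      (fun i j => A i j * ω ^ ((θ j : ℤ)))
    rw [Fintype.piFinset_univ] at h
    rw [h, Finset.sum_mul]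
    refine Finset.sum_congr rfl fun g _ => ?_
    rw [Finset.prod_mul_distrib]
    ring
  simp_rw [expand]
  rw [Finset.sum_comm]
  have swap : ∀ g : Fin n → Fin n,
      ∑ θ : Fin n → Fin (n+1),
          (∏ i, A i (g i)) * ((∏ i, ω ^ ((θ (g i) : ℤ))) * ∏ i, ω ^ (-(θ i : ℤ)))
        = (∏ i, A i (g i)) * (if Function.Bijective g then ((n+1 : ℕ) : ℂ) ^ n else 0) := by
    intro g
    rw [← Finset.mul_sum, theta_sum g]
  simp_rw [swap]
  simp_rw [mul_ite, mul_zero]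
  rw [Finset.sum_ite, Finset.sum_const_zero, add_zero]
  have hsum : ∑ g ∈ Finset.univ.filter (fun g : Fin n → Fin n => Function.Bijective g),
      ∏ i, A i (g i) = ∑ σ : Equiv.Perm (Fin n), ∏ i, A i (σ i) := by
    refine (Finset.sum_bij (fun (σ : Equiv.Perm (Fin n)) _ => (σ : Fin n → Fin n))
      ?_ ?_ ?_ ?_).symm
    · intro σ _
      exact Finset.mem_filter.mpr ⟨Finset.mem_univ _, σ.bijective⟩
    · intro σ1 _ σ2 _ h
      exact Equiv.coe_fn_injective h
    · intro g hg
      exact ⟨Equiv.ofBijective g (Finset.mem_filter.mp hg).2, Finset.mem_univ _, rfl⟩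
    · intro σ _
      rfl
  rw [← Finset.sum_mul, hsum, perm, mul_comm]

end Identity

section Analysis

variable {n : ℕ}

lemma prod_zpow_sum {α : Type*} {ω : ℂ} (hω : ω ≠ 0) (s : Finset α) (a : α → ℤ) :
    ∏ j ∈ s, ω ^ a j = ω ^ (∑ j ∈ s, a j) := by
  induction s using Finset.cons_induction with
  | empty => simp
  | cons j s hj ih => rw [Finset.prod_cons, Finset.sum_cons, ih, ← zpow_add₀ hω]

lemma abs_rou (n : ℕ) : ‖rou n‖ = 1 := by
  have : rou n = Complex.exp ((((2 * Real.pi / (n+1)) : ℝ) : ℂ) * Complex.I) := by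
    rw [rou]
    push_cast
    ring_nf
  rw [this, Complex.norm_exp_ofReal_mul_I]

lemma abs_rou_zpow (n : ℕ) (k : ℤ) : ‖rou n ^ k‖ = 1 := by
  rw [norm_zpow, abs_rou, one_zpow]

lemma prod_eq_one_forces (z : Fin n → ℝ) (hz : ∀ i, 0 ≤ z i) (hs : ∑ i, z i ≤ n) :
    (∏ i, z i ≤ 1) ∧ (∏ i, z i = 1 → ∀ i, z i = 1) := by
  have hb : ∀ i, z i ≤ Real.exp (z i - 1) := fun i => by
    have := Real.add_one_le_exp (z i - 1)
    linarith
  have hprod_le : ∏ i, z i ≤ ∏ i, Real.exp (z i - 1) :=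
    Finset.prod_le_prod (fun i _ => hz i) (fun i _ => hb i)
  have hexp : ∏ i, Real.exp (z i - 1) = Real.exp (∑ i, (z i - 1)) := (Real.exp_sum _ _).symm
  have hsum : ∑ i, (z i - 1) ≤ 0 := by
    rw [Finset.sum_sub_distrib, Finset.sum_const]
    simp only [Finset.card_univ, Fintype.card_fin, nsmul_eq_mul, mul_one]
    linarith
  have hexp_le : ∏ i, Real.exp (z i - 1) ≤ 1 := by
    rw [hexp]
    have h := Real.exp_le_exp.mpr hsum
    rwa [Real.exp_zero] at h
  refine ⟨le_trans hprod_le hexp_le, ?_⟩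
  intro hp i
  have hpos : ∀ k, 0 < z k := by
    intro k
    rcases lt_or_eq_of_le (hz k) with h | h
    · exact h
    · exfalso
      have : ∏ i, z i = 0 := Finset.prod_eq_zero (Finset.mem_univ k) h.symm
      rw [hp] at this
      norm_num at this
  have heq : ∀ k, z k = Real.exp (z k - 1) := by
    by_contra hne
    push_neg at hne
    obtain ⟨k, hk⟩ := hne
    have : ∏ i, z i < ∏ i, Real.exp (z i - 1) :=
      Finset.prod_lt_prod (fun i _ => hpos i) (fun i _ => hb i)
        ⟨k, Finset.mem_univ k, lt_of_le_of_ne (hb k) hk⟩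
    rw [hp] at this
    linarith
  by_contra hzi
  have h1 : z i - 1 ≠ 0 := fun h => hzi (by linarith)
  have := Real.add_one_lt_exp h1
  have := heq i
  linarith

lemma mulVec_sq_sum_le (A : Matrix (Fin n) (Fin n) ℂ) (h2 : opNorm A = 1) (x : Fin n → ℂ) :
    ∑ i, ‖A.mulVec x i‖ ^ 2 ≤ ∑ j, ‖x j‖ ^ 2 := by
  set y : EuclideanSpace ℂ (Fin n) := (WithLp.equiv 2 (Fin n → ℂ)).symm x with hy
  have hb := ContinuousLinearMap.le_opNorm
    (LinearMap.toContinuousLinearMap (Matrix.toEuclideanLin A)) y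
  rw [show ‖LinearMap.toContinuousLinearMap (Matrix.toEuclideanLin A)‖ = opNorm A from rfl,
    h2, one_mul] at hb
  have happ : (LinearMap.toContinuousLinearMap (Matrix.toEuclideanLin A)) y
      = (WithLp.equiv 2 (Fin n → ℂ)).symm (A.mulVec x) := by
    rw [LinearMap.coe_toContinuousLinearMap', Matrix.toEuclideanLin_apply]
    simp [hy]
  rw [happ] at hb
  have hnorm1 : ‖(WithLp.equiv 2 (Fin n → ℂ)).symm (A.mulVec x)‖
      = Real.sqrt (∑ i, ‖A.mulVec x i‖ ^ 2) := by
    rw [EuclideanSpace.norm_eq]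
    simp [WithLp.equiv_symm_apply, PiLp.toLp_apply]
  have hnorm2 : ‖y‖ = Real.sqrt (∑ j, ‖x j‖ ^ 2) := by
    rw [hy, EuclideanSpace.norm_eq]
    simp [WithLp.equiv_symm_apply, PiLp.toLp_apply]
  rw [hnorm1, hnorm2] at hb
  have hnn : (0:ℝ) ≤ ∑ j, ‖x j‖ ^ 2 :=
    Finset.sum_nonneg fun j _ => sq_nonneg _
  exact (Real.sqrt_le_sqrt_iff hnn).mp hb

end Analysis

section Forcing

variable {n : ℕ}

lemma sum_sq_B_le (A : Matrix (Fin n) (Fin n) ℂ) (h2 : opNorm A = 1)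
    (θ : Fin n → Fin (n+1)) :
    ∑ i, ‖∑ j, A i j * rou n ^ ((θ j : ℤ))‖ ^ 2 ≤ n := by
  have hmv : ∀ i, (∑ j, A i j * rou n ^ ((θ j : ℤ)))
      = A.mulVec (fun j => rou n ^ ((θ j : ℤ))) i := by
    intro i
    simp [Matrix.mulVec, dotProduct]
  simp_rw [hmv]
  have := mulVec_sq_sum_le A h2 (fun j => rou n ^ ((θ j : ℤ)))
  calc ∑ i, ‖A.mulVec (fun j => rou n ^ ((θ j : ℤ))) i‖ ^ 2
      ≤ ∑ j, ‖rou n ^ ((θ j : ℤ))‖ ^ 2 := this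
    _ = ∑ j : Fin n, (1:ℝ) := by
        refine Finset.sum_congr rfl fun j _ => ?_
        rw [abs_rou_zpow]
        norm_num
    _ = n := by simp

lemma abs_B_eq_one (A : Matrix (Fin n) (Fin n) ℂ)
    (h1 : ‖perm A‖ = 1) (h2 : opNorm A = 1) :
    ∀ (θ : Fin n → Fin (n+1)) (i : Fin n),
      ‖∑ j, A i j * rou n ^ ((θ j : ℤ))‖ = 1 := by
  set ω := rou n with hω
  set B : (Fin n → Fin (n+1)) → Fin n → ℂ :=
    fun θ i => ∑ j, A i j * ω ^ ((θ j : ℤ)) with hB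
  set babs : (Fin n → Fin (n+1)) → ℝ := fun θ => ∏ i, ‖B θ i‖ with hbabs
  -- pointwise bound : babs θ ≤ 1
  have hforce : ∀ θ, (∏ i, ‖B θ i‖ ^ 2 ≤ 1) ∧
      (∏ i, ‖B θ i‖ ^ 2 = 1 → ∀ i, ‖B θ i‖ ^ 2 = 1) := by
    intro θ
    exact prod_eq_one_forces (fun i => ‖B θ i‖ ^ 2)
      (fun i => sq_nonneg _) (sum_sq_B_le A h2 θ)
  have hble : ∀ θ, babs θ ≤ 1 := by
    intro θ
    have hsq : babs θ ^ 2 ≤ 1 := by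
      rw [hbabs]
      simp only []
      rw [← Finset.prod_pow]
      exact (hforce θ).1
    have hnn : 0 ≤ babs θ := Finset.prod_nonneg fun i _ => norm_nonneg _
    nlinarith
  -- the equality chain
  have habs_term : ∀ θ : Fin n → Fin (n+1),
      ‖∏ i, (B θ i * ω ^ (-(θ i : ℤ)))‖ = babs θ := by
    intro θ
    rw [norm_prod]
    refine Finset.prod_congr rfl fun i _ => ?_
    rw [norm_mul, abs_rou_zpow, mul_one]
  have hid := identity A
  have hcard : (Finset.univ : Finset (Fin n → Fin (n+1))).card = (n+1)^n := by
    rw [Finset.card_univ, Fintype.card_pi]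
    simp
  have hchain : ((n+1:ℝ))^n ≤ ∑ θ : Fin n → Fin (n+1), babs θ := by
    have h0 : ‖((n+1:ℕ):ℂ)^n * perm A‖ = ((n+1:ℝ))^n := by
      rw [norm_mul, norm_pow, h1, mul_one, Complex.norm_natCast]
      norm_num
    calc ((n+1:ℝ))^n = ‖((n+1:ℕ):ℂ)^n * perm A‖ := h0.symm
      _ = ‖∑ θ : Fin n → Fin (n+1), ∏ i, (B θ i * ω ^ (-(θ i : ℤ)))‖ := by
          rw [hid]
      _ ≤ ∑ θ : Fin n → Fin (n+1), ‖∏ i, (B θ i * ω ^ (-(θ i : ℤ)))‖ :=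
          norm_sum_le _ _
      _ = ∑ θ : Fin n → Fin (n+1), babs θ :=
          Finset.sum_congr rfl fun θ _ => habs_term θ
  have hsum_le : ∑ θ : Fin n → Fin (n+1), babs θ ≤ ((n+1:ℝ))^n := by
    calc ∑ θ : Fin n → Fin (n+1), babs θ ≤ ∑ _θ : Fin n → Fin (n+1), (1:ℝ) :=
        Finset.sum_le_sum fun θ _ => hble θ
      _ = ((n+1:ℝ))^n := by
          rw [Finset.sum_const, hcard]
          simp
  have hall : ∀ θ, babs θ = 1 := by
    by_contra hne
    push_neg at hne
    obtain ⟨θ0, hθ0⟩ := hne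
    have hlt : ∑ θ : Fin n → Fin (n+1), babs θ < ∑ _θ : Fin n → Fin (n+1), (1:ℝ) :=
      Finset.sum_lt_sum (fun θ _ => hble θ)
        ⟨θ0, Finset.mem_univ θ0, lt_of_le_of_ne (hble θ0) hθ0⟩
    rw [Finset.sum_const, hcard] at hlt
    simp only [nsmul_eq_mul, mul_one] at hlt
    push_cast at hlt
    linarith
  intro θ i
  have hprod : ∏ k, ‖B θ k‖ ^ 2 = 1 := by
    rw [Finset.prod_pow, show (∏ k, ‖B θ k‖) = babs θ from rfl, hall θ]
    norm_num
  have := (hforce θ).2 hprod i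
  have hnn : 0 ≤ ‖B θ i‖ := norm_nonneg _
  nlinarith

end Forcing

section RowOrth

variable {n : ℕ}

private def cvec (j k p q : Fin n) : Fin n → ℤ := fun l =>
  (if l = j then 1 else 0) - (if l = k then 1 else 0)
    + (if l = q then 1 else 0) - (if l = p then 1 else 0)

lemma cvec_sum_eval (hn : 1 < n) (p q j k : Fin n) (hpq : p ≠ q) :
    (∑ θ : Fin n → Fin (n+1), ∏ l, rou n ^ (cvec j k p q l * (θ l : ℤ)))
      = if j = p ∧ k = q then ((n+1:ℕ):ℂ)^n else 0 := by
  rw [multiCharSum (Nat.succ_ne_zero n) (rou_prim n) (cvec j k p q)]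
  by_cases hcase : j = p ∧ k = q
  · obtain ⟨rfl, rfl⟩ := hcase
    have hz : ∀ l, cvec j k j k l = 0 := by
      intro l
      simp only [cvec]
      ring
    rw [if_pos ⟨rfl, rfl⟩]
    have : ∀ l ∈ (Finset.univ : Finset (Fin n)),
        (if ((n+1:ℕ):ℤ) ∣ cvec j k j k l then ((n+1:ℕ):ℂ) else 0) = ((n+1:ℕ):ℂ) := by
      intro l _
      rw [hz l]
      simp
    rw [Finset.prod_congr rfl this, Finset.prod_const]
    simp
  · rw [if_neg hcase]
    -- find a coordinate where cvec is nonzero but small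
    have hwitness : ∃ l0 : Fin n, cvec j k p q l0 ≠ 0 ∧ |cvec j k p q l0| < (n:ℤ)+1 := by
      by_cases hjp : j = p
      · subst hjp
        have hkq : k ≠ q := fun h => hcase ⟨rfl, h⟩
        have hval : cvec j k j q q = 1 := by
          simp only [cvec]
          rw [if_neg (fun h : q = k => hkq h.symm)]
          simp
        refine ⟨q, ?_, ?_⟩
        · rw [hval]
          omega
        · rw [hval, abs_lt]
          omega
      · have hval : cvec j k p q p = 0 - (if p = k then 1 else 0) + 0 - 1 := by
          simp only [cvec]
          rw [if_neg (fun h => hjp h.symm), if_neg hpq]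
          simp
        refine ⟨p, ?_, ?_⟩
        · rw [hval]
          split_ifs <;> omega
        · rw [hval, abs_lt]
          split_ifs <;> omega
    obtain ⟨l0, hne0, habs⟩ := hwitness
    refine Finset.prod_eq_zero (Finset.mem_univ l0) ?_
    rw [if_neg]
    intro hdvd
    have : cvec j k p q l0 = 0 := by
      refine Int.eq_zero_of_abs_lt_dvd ?_ habs
      exact_mod_cast hdvd
    exact hne0 this

end RowOrth

section RowOrth2

variable {n : ℕ}

lemma conj_rou_zpow (n : ℕ) (t : ℤ) : (starRingEnd ℂ) (rou n ^ t) = rou n ^ (-t) := by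
  have h1 : rou n * (starRingEnd ℂ) (rou n) = 1 := by
    rw [Complex.mul_conj, Complex.normSq_eq_norm_sq, abs_rou]
    norm_num
  have h2 : (starRingEnd ℂ) (rou n) = (rou n)⁻¹ := eq_inv_of_mul_eq_one_left
    (by rw [mul_comm]; exact h1)
  rw [map_zpow₀, h2, inv_zpow, ← zpow_neg]

private def evec (p q : Fin n) : Fin n → ℤ := fun l =>
  (if l = q then 1 else 0) - (if l = p then 1 else 0)

lemma evec_sum_eval (p q : Fin n) (hpq : p ≠ q) :
    (∑ θ : Fin n → Fin (n+1), ∏ l, rou n ^ (evec p q l * (θ l : ℤ))) = 0 := by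
  rw [multiCharSum (Nat.succ_ne_zero n) (rou_prim n) (evec p q)]
  refine Finset.prod_eq_zero (Finset.mem_univ q) ?_
  have hval : evec p q q = 1 := by
    simp only [evec]
    rw [if_neg (Ne.symm hpq)]
    simp
  rw [hval, if_neg]
  intro hdvd
  have hn : 0 < n := q.pos
  have h1 : ((n+1:ℕ):ℤ) ≤ 1 := Int.le_of_dvd one_pos hdvd
  omega

lemma row_orth (A : Matrix (Fin n) (Fin n) ℂ)
    (hB : ∀ (θ : Fin n → Fin (n+1)) (i : Fin n),
      ‖∑ j, A i j * rou n ^ ((θ j : ℤ))‖ = 1)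
    (i p q : Fin n) (hpq : p ≠ q) :
    A i p * (starRingEnd ℂ) (A i q) = 0 := by
  set ω := rou n with hωdef
  have hω : ω ≠ 0 := rou_ne_zero n
  have key : ∀ θ : Fin n → Fin (n+1),
      (∑ j, A i j * ω ^ ((θ j : ℤ))) * (starRingEnd ℂ) (∑ j, A i j * ω ^ ((θ j : ℤ))) = 1 := by
    intro θ
    rw [Complex.mul_conj, Complex.normSq_eq_norm_sq, hB θ i]
    norm_num
  -- expansion of each term
  have hexpand : ∀ θ : Fin n → Fin (n+1),
      ((∑ j, A i j * ω ^ ((θ j : ℤ))) * (starRingEnd ℂ) (∑ j, A i j * ω ^ ((θ j : ℤ))))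
          * ∏ l, ω ^ (evec p q l * (θ l : ℤ))
        = ∑ j, ∑ k, (A i j * (starRingEnd ℂ) (A i k))
            * ∏ l, ω ^ (cvec j k p q l * (θ l : ℤ)) := by
    intro θ
    have hconj : (starRingEnd ℂ) (∑ j, A i j * ω ^ ((θ j : ℤ)))
        = ∑ k, (starRingEnd ℂ) (A i k) * ω ^ (-(θ k : ℤ)) := by
      rw [map_sum]
      refine Finset.sum_congr rfl fun k _ => ?_
      rw [map_mul, conj_rou_zpow]
    rw [hconj, Finset.sum_mul_sum, Finset.sum_mul]
    refine Finset.sum_congr rfl fun j _ => ?_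
    rw [Finset.sum_mul]
    refine Finset.sum_congr rfl fun k _ => ?_
    have hev : ∏ l, ω ^ (evec p q l * (θ l : ℤ)) = ω ^ ((θ q : ℤ) - (θ p : ℤ)) := by
      rw [prod_zpow_sum hω]
      congr 1
      have : ∀ l ∈ (Finset.univ : Finset (Fin n)), evec p q l * (θ l : ℤ)
          = (if l = q then (θ l : ℤ) else 0) - (if l = p then (θ l : ℤ) else 0) := by
        intro l _
        simp only [evec]
        split_ifs <;> ring
      rw [Finset.sum_congr rfl this, Finset.sum_sub_distrib]
      simp [Finset.sum_ite_eq']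
    have hcv : ∏ l, ω ^ (cvec j k p q l * (θ l : ℤ))
        = ω ^ ((θ j : ℤ) - (θ k : ℤ) + (θ q : ℤ) - (θ p : ℤ)) := by
      rw [prod_zpow_sum hω]
      congr 1
      have : ∀ l ∈ (Finset.univ : Finset (Fin n)), cvec j k p q l * (θ l : ℤ)
          = (if l = j then (θ l : ℤ) else 0) - (if l = k then (θ l : ℤ) else 0)
            + (if l = q then (θ l : ℤ) else 0) - (if l = p then (θ l : ℤ) else 0) := by
        intro l _
        simp only [cvec]
        split_ifs <;> ring
      rw [Finset.sum_congr rfl this]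
      rw [Finset.sum_sub_distrib, Finset.sum_add_distrib, Finset.sum_sub_distrib]
      simp [Finset.sum_ite_eq']
    rw [hev, hcv]
    rw [show (θ j : ℤ) - (θ k : ℤ) + (θ q : ℤ) - (θ p : ℤ)
        = (θ j : ℤ) + (-(θ k : ℤ)) + ((θ q : ℤ) - (θ p : ℤ)) by ring]
    rw [zpow_add₀ hω, zpow_add₀ hω]
    ring
  -- sum over θ of both sides
  have hn : 1 < n := by
    have : Nontrivial (Fin n) := ⟨⟨p, q, hpq⟩⟩
    have h := Fintype.one_lt_card_iff_nontrivial.mpr this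
    simpa using h
  have hsum0 : ∑ θ : Fin n → Fin (n+1),
      ((∑ j, A i j * ω ^ ((θ j : ℤ))) * (starRingEnd ℂ) (∑ j, A i j * ω ^ ((θ j : ℤ))))
        * ∏ l, ω ^ (evec p q l * (θ l : ℤ)) = 0 := by
    have : ∀ θ : Fin n → Fin (n+1),
        ((∑ j, A i j * ω ^ ((θ j : ℤ))) * (starRingEnd ℂ) (∑ j, A i j * ω ^ ((θ j : ℤ))))
          * ∏ l, ω ^ (evec p q l * (θ l : ℤ)) = ∏ l, ω ^ (evec p q l * (θ l : ℤ)) := by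
      intro θ
      rw [key θ, one_mul]
    rw [Finset.sum_congr rfl fun θ _ => this θ]
    exact evec_sum_eval p q hpq
  have hsum1 : ∑ θ : Fin n → Fin (n+1),
      (∑ j, ∑ k, (A i j * (starRingEnd ℂ) (A i k))
        * ∏ l, ω ^ (cvec j k p q l * (θ l : ℤ)))
      = (A i p * (starRingEnd ℂ) (A i q)) * ((n+1:ℕ):ℂ)^n := by
    rw [Finset.sum_comm]
    have hswap : ∀ j, ∑ θ : Fin n → Fin (n+1), ∑ k, (A i j * (starRingEnd ℂ) (A i k))
        * ∏ l, ω ^ (cvec j k p q l * (θ l : ℤ))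
        = ∑ k, (A i j * (starRingEnd ℂ) (A i k))
            * (if j = p ∧ k = q then ((n+1:ℕ):ℂ)^n else 0) := by
      intro j
      rw [Finset.sum_comm]
      refine Finset.sum_congr rfl fun k _ => ?_
      rw [← Finset.mul_sum, cvec_sum_eval hn p q j k hpq]
    rw [Finset.sum_congr rfl fun j _ => hswap j]
    rw [Finset.sum_eq_single p]
    · rw [Finset.sum_eq_single q]
      · simp
      · intro k _ hk
        rw [if_neg (fun h => hk h.2), mul_zero]
      · intro h
        exact absurd (Finset.mem_univ q) h
    · intro j _ hj
      refine Finset.sum_eq_zero fun k _ => ?_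
      rw [if_neg (fun h => hj h.1), mul_zero]
    · intro h
      exact absurd (Finset.mem_univ p) h
  have hfinal : (A i p * (starRingEnd ℂ) (A i q)) * ((n+1:ℕ):ℂ)^n = 0 := by
    rw [← hsum1, ← hsum0]
    exact Finset.sum_congr rfl fun θ _ => (hexpand θ).symm
  have hpow : ((n+1:ℕ):ℂ)^n ≠ 0 := by
    apply pow_ne_zero
    exact Nat.cast_ne_zero.mpr (Nat.succ_ne_zero n)
  exact (mul_eq_zero.mp hfinal).resolve_right hpow

end RowOrth2


/-- Equality case: if `|perm A| = ‖A‖₂ ^ n` and `‖A‖₂ = 1`, then A is a permutation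
matrix times a unitary diagonal matrix. -/
theorem extremal_characterization {n : ℕ} (A : Matrix (Fin n) (Fin n) ℂ)
    (h1 : ‖perm A‖ = opNorm A ^ n) (h2 : opNorm A = 1) :
    ∃ (σ : Equiv.Perm (Fin n)) (d : Fin n → ℂ),
      (∀ i, ‖d i‖ = 1) ∧ A = σ.permMatrix ℂ * Matrix.diagonal d := by
  have habs : ‖perm A‖ = 1 := by rw [h1, h2, one_pow]
  have hB := abs_B_eq_one A habs h2
  have hrow := row_orth A hB
  have hperm_ne : perm A ≠ 0 := by
    intro h
    rw [h] at habs
    simp at habs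
  have hσex : ∃ σ : Equiv.Perm (Fin n), ∏ i, A i (σ i) ≠ 0 := by
    by_contra h
    push_neg at h
    apply hperm_ne
    rw [perm]
    exact Finset.sum_eq_zero fun σ _ => h σ
  obtain ⟨σ, hσ⟩ := hσex
  have hdiag : ∀ i, A i (σ i) ≠ 0 := by
    intro i h
    exact hσ (Finset.prod_eq_zero (Finset.mem_univ i) h)
  have hzero : ∀ i j, j ≠ σ i → A i j = 0 := by
    intro i j hj
    have h := hrow i (σ i) j (fun h => hj h.symm)
    rcases mul_eq_zero.mp h with h' | h'
    · exact absurd h' (hdiag i)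
    · rwa [map_eq_zero] at h'
  set d : Fin n → ℂ := fun j => A (σ.symm j) j with hd
  have hrowsum : ∀ i : Fin n, (∑ k, A i k) = A i (σ i) := by
    intro i
    rw [Finset.sum_eq_single (σ i)]
    · intro k _ hk
      exact hzero i k hk
    · intro h
      exact absurd (Finset.mem_univ (σ i)) h
  have habs_d : ∀ j, ‖d j‖ = 1 := by
    intro j
    have hBj := hB (fun _ => (0 : Fin (n+1))) (σ.symm j)
    simp only [Fin.val_zero, Nat.cast_zero, zpow_zero, mul_one] at hBj
    rw [hrowsum (σ.symm j), Equiv.apply_symm_apply] at hBj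
    exact hBj
  refine ⟨σ, d, habs_d, ?_⟩
  ext i j
  rw [Matrix.mul_diagonal]
  simp only [Equiv.Perm.permMatrix, PEquiv.toMatrix_apply, Equiv.toPEquiv_apply,
    Option.mem_def, Option.some.injEq]
  by_cases hj : σ i = j
  · subst hj
    rw [if_pos rfl, one_mul, hd]
    simp only [Equiv.symm_apply_apply]
  · rw [if_neg hj, zero_mul]
    exact hzero i j (fun h => hj h.symm)
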